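/- Let {a_1,…,a_r} and {b_1,…,b_s} be ℚ-linearly independent sets of real algebraic numbers with a_1,…,a_r, i·b_1,…, i·b_s ∈ K, and let P ∈ ℛ be irreducible (in particular not a unit). Define Q := ∂P/∂x + Σ_{j=1}^r a_j · y_j · ∂P/∂y_j + Σ_{j=1}^s i·b_j · z_j · ∂P/∂z_j ∈ ℛ. Then P does not divide Q in ℛ; consequently P and Q are coprime in ℛ. -/

import Mathlib

open Complex

noncomputable section

/-- Exponents of Laurent monomials: a nonnegative exponent for `x`,
integer exponents for the `y`- and `z`-variables. -/
abbrev LaurentExp (r s : ℕ) : Type := ℕ × (Fin r → ℤ) × (Fin s → ℤ)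

/-- The ring ℛ = K[x, y₁, y₁⁻¹, …, y_r, y_r⁻¹, z₁, z₁⁻¹, …, z_s, z_s⁻¹]
of Laurent polynomials over a subfield K of ℂ. -/
abbrev LaurentRing (K : Subfield ℂ) (r s : ℕ) : Type :=
  AddMonoidAlgebra K (LaurentExp r s)

/-- Conjugation automorphism on the Laurent ring: conjugate the coefficients and
negate the exponents of the `z`-variables. -/
def lconj (K : Subfield ℂ) (hK : ∀ z ∈ K, (starRingEnd ℂ) z ∈ K) (r s : ℕ)
    (P : LaurentRing K r s) : LaurentRing K r s :=
  Finsupp.sum P.coeff fun e c =>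
    AddMonoidAlgebra.single (e.1, e.2.1, -e.2.2) (⟨(starRingEnd ℂ) (c : ℂ), hK _ c.2⟩ : K)

/-- The monomial z^u = z₁^{u₁} ⋯ z_s^{u_s}. -/
def zmon (K : Subfield ℂ) (r s : ℕ) (u : Fin s → ℤ) : LaurentRing K r s :=
  AddMonoidAlgebra.single ((0 : ℕ), (0 : Fin r → ℤ), u) 1

/-- Evaluation of P ∈ ℛ at x = t, y_j = e^{a_j t}, z_j = e^{i b_j t}. -/
def leval (K : Subfield ℂ) (r s : ℕ) (a : Fin r → ℝ) (b : Fin s → ℝ)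
    (P : LaurentRing K r s) (t : ℝ) : ℂ :=
  Finsupp.sum P.coeff fun e c =>
    (c : ℂ) * (t : ℂ) ^ e.1 *
      (∏ j, Complex.exp ((a j : ℂ) * t) ^ (e.2.1 j)) *
      (∏ j, Complex.exp (Complex.I * (b j : ℂ) * t) ^ (e.2.2 j))

/-- Schanuel's Conjecture: if a₁,…,aₙ are complex numbers linearly independent over ℚ,
then the field ℚ(a₁,…,aₙ, e^{a₁},…,e^{aₙ}) has transcendence degree at least n over ℚ,
i.e. it contains n algebraically independent elements. -/
def SchanuelConjecture : Prop :=
  ∀ (n : ℕ) (a : Fin n → ℂ), LinearIndependent ℚ a →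
    ∃ g : Fin n → ℂ,
      (∀ i, g i ∈ IntermediateField.adjoin ℚ
        (Set.range a ∪ Set.range fun i => Complex.exp (a i))) ∧
      AlgebraicIndependent ℚ g

/-- Formal partial derivative ∂P/∂x, term by term on Laurent monomials. -/
def derivX (K : Subfield ℂ) (r s : ℕ) (P : LaurentRing K r s) : LaurentRing K r s :=
  Finsupp.sum P.coeff fun e c =>
    AddMonoidAlgebra.single (e.1 - 1, e.2.1, e.2.2) ((e.1 : K) * c)

/-- Formal partial derivative ∂P/∂y_j, term by term on Laurent monomials. -/
def derivY (K : Subfield ℂ) (r s : ℕ) (j : Fin r) (P : LaurentRing K r s) :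
    LaurentRing K r s :=
  Finsupp.sum P.coeff fun e c =>
    AddMonoidAlgebra.single (e.1, e.2.1 - Pi.single j 1, e.2.2) ((e.2.1 j : K) * c)

/-- Formal partial derivative ∂P/∂z_j, term by term on Laurent monomials. -/
def derivZ (K : Subfield ℂ) (r s : ℕ) (j : Fin s) (P : LaurentRing K r s) :
    LaurentRing K r s :=
  Finsupp.sum P.coeff fun e c =>
    AddMonoidAlgebra.single (e.1, e.2.1, e.2.2 - Pi.single j 1) ((e.2.2 j : K) * c)


section IDAaux

open AddMonoidAlgebra

variable {K : Subfield ℂ} {r s : ℕ}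

lemma IDA.sum_single_apply (P : LaurentRing K r s) (k : LaurentExp r s → K) (e : LaurentExp r s) :
    (Finsupp.sum P.coeff fun e' c => AddMonoidAlgebra.single e' (k e' * c)).coeff e
      = k e * P.coeff e := by
  classical
  rw [AddMonoidAlgebra.coeff_finsuppSum, Finsupp.sum_apply, Finsupp.sum]
  simp only [AddMonoidAlgebra.coeff_single, Finsupp.single_apply]
  rw [Finset.sum_ite_eq' P.coeff.support e (fun e' => k e' * P.coeff e')]
  split_ifs with h
  · rfl
  · rw [Finsupp.notMem_support_iff.mp h, mul_zero]

lemma IDA.derivX_apply (P : LaurentRing K r s) (e : LaurentExp r s) :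
    (derivX K r s P).coeff e = ((e.1 + 1 : ℕ) : K) * P.coeff (e.1 + 1, e.2) := by
  classical
  rw [derivX, AddMonoidAlgebra.coeff_finsuppSum, Finsupp.sum_apply, Finsupp.sum]
  simp only [AddMonoidAlgebra.coeff_single, Finsupp.single_apply]
  have key : ∀ e' : LaurentExp r s,
      (if ((e'.1 - 1, e'.2.1, e'.2.2) : LaurentExp r s) = e then (e'.1 : K) * P.coeff e' else 0)
        = (if e' = (e.1 + 1, e.2) then ((e.1 + 1 : ℕ) : K) * P.coeff e' else 0) := by
    intro e'
    by_cases h1 : e' = (e.1 + 1, e.2)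
    · subst h1
      simp
    · rw [if_neg h1]
      by_cases h2 : ((e'.1 - 1, e'.2.1, e'.2.2) : LaurentExp r s) = e
      · have h3 : e'.1 - 1 = e.1 ∧ e'.2 = e.2 := by
          refine ⟨congrArg Prod.fst h2, ?_⟩
          have := congrArg Prod.snd h2
          simpa using this
        have h4 : e'.1 = 0 ∧ e.1 = 0 := by
          have hne : e'.1 ≠ e.1 + 1 := by
            intro hc
            exact h1 (Prod.ext hc h3.2)
          omega
        rw [if_pos h2, h4.1]
        simp
      · rw [if_neg h2]
  rw [Finset.sum_congr rfl fun e' _ => key e']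
  rw [Finset.sum_ite_eq' P.coeff.support ((e.1 + 1, e.2) : LaurentExp r s)
    (fun e' => ((e.1 + 1 : ℕ) : K) * P.coeff e')]
  split_ifs with h
  · rfl
  · rw [Finsupp.notMem_support_iff.mp h, mul_zero]

lemma IDA.single_mul_derivY_apply (P : LaurentRing K r s) (j : Fin r) (c : K)
    (e : LaurentExp r s) :
    (AddMonoidAlgebra.single ((0 : ℕ), (Pi.single j 1 : Fin r → ℤ), (0 : Fin s → ℤ)) c
      * derivY K r s j P).coeff e = c * (e.2.1 j : K) * P.coeff e := by
  have h : AddMonoidAlgebra.single ((0 : ℕ), (Pi.single j 1 : Fin r → ℤ), (0 : Fin s → ℤ)) c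
      * derivY K r s j P
      = Finsupp.sum P.coeff fun e' c' => AddMonoidAlgebra.single e' ((c * (e'.2.1 j : K)) * c') := by
    rw [derivY, Finsupp.sum, Finsupp.sum, Finset.mul_sum]
    refine Finset.sum_congr rfl fun e' _ => ?_
    rw [AddMonoidAlgebra.single_mul_single]
    congr 1
    refine Prod.ext (by simp) (Prod.ext ?_ (by simp))
    show Pi.single j 1 + (e'.2.1 - Pi.single j 1) = e'.2.1
    abel
    ring
  rw [h, IDA.sum_single_apply]

lemma IDA.single_mul_derivZ_apply (P : LaurentRing K r s) (j : Fin s) (c : K)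
    (e : LaurentExp r s) :
    (AddMonoidAlgebra.single ((0 : ℕ), (0 : Fin r → ℤ), (Pi.single j 1 : Fin s → ℤ)) c
      * derivZ K r s j P).coeff e = c * (e.2.2 j : K) * P.coeff e := by
  have h : AddMonoidAlgebra.single ((0 : ℕ), (0 : Fin r → ℤ), (Pi.single j 1 : Fin s → ℤ)) c
      * derivZ K r s j P
      = Finsupp.sum P.coeff fun e' c' => AddMonoidAlgebra.single e' ((c * (e'.2.2 j : K)) * c') := by
    rw [derivZ, Finsupp.sum, Finsupp.sum, Finset.mul_sum]
    refine Finset.sum_congr rfl fun e' _ => ?_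
    rw [AddMonoidAlgebra.single_mul_single]
    congr 1
    refine Prod.ext (by simp) (Prod.ext (by simp) ?_)
    show Pi.single j 1 + (e'.2.2 - Pi.single j 1) = e'.2.2
    abel
    ring
  rw [h, IDA.sum_single_apply]

lemma IDA.int_indep {n : ℕ} {a : Fin n → ℝ} (h : LinearIndependent ℚ a) (u : Fin n → ℤ)
    (hu : ∑ j, (u j : ℝ) * a j = 0) : u = 0 := by
  have h2 := Fintype.linearIndependent_iff.mp h (fun j => (u j : ℚ))
  have h3 : ∑ j, ((u j : ℚ)) • a j = 0 := by
    rw [← hu]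
    refine Finset.sum_congr rfl fun j _ => ?_
    rw [Rat.smul_def]
    norm_num
  funext j
  have := h2 h3 j
  exact_mod_cast this

lemma IDA.diff_indep {n : ℕ} {a : Fin n → ℝ} (h : LinearIndependent ℚ a)
    {u u' : Fin n → ℤ} (hu : ∑ j, (u j : ℝ) * a j = ∑ j, (u' j : ℝ) * a j) : u = u' := by
  have key := IDA.int_indep h (u - u') ?_
  · funext j
    have h0 : u j - u' j = 0 := congrFun key j
    omega
  · have hp : ∀ j, (((u - u') j : ℤ) : ℝ) * a j
        = (u j : ℝ) * a j - (u' j : ℝ) * a j := by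
      intro j
      have : (u - u') j = u j - u' j := rfl
      rw [this]
      push_cast
      ring
    rw [Finset.sum_congr rfl fun j _ => hp j, Finset.sum_sub_distrib, hu, sub_self]

def IDA.lam (a : Fin r → ℝ) (b : Fin s → ℝ) (haK : ∀ j, (a j : ℂ) ∈ K)
    (hbK : ∀ j, Complex.I * (b j : ℂ) ∈ K) (g : (Fin r → ℤ) × (Fin s → ℤ)) : K :=
  (∑ j, (g.1 j : K) * ⟨(a j : ℂ), haK j⟩) + ∑ j, (g.2 j : K) * ⟨Complex.I * (b j : ℂ), hbK j⟩

lemma IDA.lam_coe (a : Fin r → ℝ) (b : Fin s → ℝ) (haK : ∀ j, (a j : ℂ) ∈ K)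
    (hbK : ∀ j, Complex.I * (b j : ℂ) ∈ K) (g : (Fin r → ℤ) × (Fin s → ℤ)) :
    ((IDA.lam a b haK hbK g : K) : ℂ)
      = ((∑ j, (g.1 j : ℝ) * a j : ℝ) : ℂ) + ((∑ j, (g.2 j : ℝ) * b j : ℝ) : ℂ) * Complex.I := by
  have h1 : ((IDA.lam a b haK hbK g : K) : ℂ)
      = (∑ j, (g.1 j : ℂ) * (a j : ℂ)) + ∑ j, (g.2 j : ℂ) * (Complex.I * (b j : ℂ)) := by
    rw [IDA.lam]
    push_cast
    rfl
  rw [h1]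
  push_cast
  rw [Finset.sum_mul]
  congr 1
  exact Finset.sum_congr rfl fun j _ => by ring

lemma IDA.lam_inj (a : Fin r → ℝ) (b : Fin s → ℝ) (haK : ∀ j, (a j : ℂ) ∈ K)
    (hbK : ∀ j, Complex.I * (b j : ℂ) ∈ K)
    (haLI : LinearIndependent ℚ a) (hbLI : LinearIndependent ℚ b)
    {g g' : (Fin r → ℤ) × (Fin s → ℤ)}
    (h : IDA.lam a b haK hbK g = IDA.lam a b haK hbK g') : g = g' := by
  have hc : ((IDA.lam a b haK hbK g : K) : ℂ) = ((IDA.lam a b haK hbK g' : K) : ℂ) := by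
    exact congrArg (fun x : K => (x : ℂ)) h
  rw [IDA.lam_coe, IDA.lam_coe] at hc
  have hre : (∑ j, (g.1 j : ℝ) * a j) = ∑ j, (g'.1 j : ℝ) * a j := by
    have := congrArg Complex.re hc
    simpa using this
  have him : (∑ j, (g.2 j : ℝ) * b j) = ∑ j, (g'.2 j : ℝ) * b j := by
    have := congrArg Complex.im hc
    simpa using this
  exact Prod.ext (IDA.diff_indep haLI hre) (IDA.diff_indep hbLI him)

lemma IDA.lex_add (x1 y1 z1 x2 y2 z2 : ℝ) :
    (toLex (x1, toLex (y1, z1)) : ℝ ×ₗ (ℝ ×ₗ ℝ)) + toLex (x2, toLex (y2, z2))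
      = toLex (x1 + x2, toLex (y1 + y2, z1 + z2)) := rfl

lemma IDA.le3_iff (x1 y1 z1 x2 y2 z2 : ℝ) :
    (toLex (x1, toLex (y1, z1)) : ℝ ×ₗ (ℝ ×ₗ ℝ)) ≤ toLex (x2, toLex (y2, z2)) ↔
      x1 < x2 ∨ (x1 = x2 ∧ (y1 < y2 ∨ (y1 = y2 ∧ z1 ≤ z2))) := by
  rw [Prod.Lex.le_iff]
  constructor
  · rintro (h | ⟨h, h2⟩)
    · exact Or.inl h
    · refine Or.inr ⟨h, ?_⟩
      have h2' : (toLex (y1, z1) : ℝ ×ₗ ℝ) ≤ toLex (y2, z2) := h2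
      rw [Prod.Lex.le_iff] at h2'
      exact h2'
  · rintro (h | ⟨h, h2⟩)
    · exact Or.inl h
    · refine Or.inr ⟨h, ?_⟩
      show (toLex (y1, z1) : ℝ ×ₗ ℝ) ≤ toLex (y2, z2)
      rw [Prod.Lex.le_iff]
      exact h2

def IDA.phi (a : Fin r → ℝ) (b : Fin s → ℝ) (e : LaurentExp r s) : ℝ ×ₗ (ℝ ×ₗ ℝ) :=
  toLex (∑ j, (e.2.1 j : ℝ) * a j, toLex (∑ j, (e.2.2 j : ℝ) * b j, (e.1 : ℝ)))

def IDA.delta : ℝ ×ₗ (ℝ ×ₗ ℝ) := toLex (0, toLex (0, 1))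

lemma IDA.phi_add (a : Fin r → ℝ) (b : Fin s → ℝ) (e e' : LaurentExp r s) :
    IDA.phi a b (e + e') = IDA.phi a b e + IDA.phi a b e' := by
  rw [IDA.phi, IDA.phi, IDA.phi, IDA.lex_add]
  refine congrArg toLex (Prod.ext ?_ (congrArg toLex (Prod.ext ?_ ?_)))
  · show (∑ j, (((e.2.1 + e'.2.1) j : ℤ) : ℝ) * a j)
      = (∑ j, (e.2.1 j : ℝ) * a j) + ∑ j, (e'.2.1 j : ℝ) * a j
    rw [← Finset.sum_add_distrib]
    refine Finset.sum_congr rfl fun j _ => ?_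
    have h : (e.2.1 + e'.2.1) j = e.2.1 j + e'.2.1 j := rfl
    rw [h]
    push_cast
    ring
  · show (∑ j, (((e.2.2 + e'.2.2) j : ℤ) : ℝ) * b j)
      = (∑ j, (e.2.2 j : ℝ) * b j) + ∑ j, (e'.2.2 j : ℝ) * b j
    rw [← Finset.sum_add_distrib]
    refine Finset.sum_congr rfl fun j _ => ?_
    have h : (e.2.2 + e'.2.2) j = e.2.2 j + e'.2.2 j := rfl
    rw [h]
    push_cast
    ring
  · show ((e.1 + e'.1 : ℕ) : ℝ) = (e.1 : ℝ) + (e'.1 : ℝ)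
    push_cast
    ring

lemma IDA.phi_succ (a : Fin r → ℝ) (b : Fin s → ℝ) (e : LaurentExp r s) :
    IDA.phi a b (e.1 + 1, e.2) = IDA.phi a b e + IDA.delta := by
  rw [IDA.phi, IDA.phi, IDA.delta, IDA.lex_add]
  refine congrArg toLex (Prod.ext (by simp) (congrArg toLex (Prod.ext (by simp) ?_)))
  show ((e.1 + 1 : ℕ) : ℝ) = (e.1 : ℝ) + 1
  push_cast
  ring

lemma IDA.phi_mono (a : Fin r → ℝ) (b : Fin s → ℝ) {e e' : LaurentExp r s}
    (h2 : e.2 = e'.2) (h1 : e.1 ≤ e'.1) : IDA.phi a b e ≤ IDA.phi a b e' := by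
  rw [IDA.phi, IDA.phi, IDA.le3_iff]
  exact Or.inr ⟨by rw [h2], Or.inr ⟨by rw [h2], by exact_mod_cast h1⟩⟩

lemma IDA.phi_inj (a : Fin r → ℝ) (b : Fin s → ℝ)
    (haLI : LinearIndependent ℚ a) (hbLI : LinearIndependent ℚ b)
    {e e' : LaurentExp r s} (h : IDA.phi a b e = IDA.phi a b e') : e = e' := by
  rw [IDA.phi, IDA.phi] at h
  have hA : (∑ j, (e.2.1 j : ℝ) * a j) = ∑ j, (e'.2.1 j : ℝ) * a j :=
    congrArg (fun p : ℝ ×ₗ (ℝ ×ₗ ℝ) => (ofLex p).1) h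
  have hB : (∑ j, (e.2.2 j : ℝ) * b j) = ∑ j, (e'.2.2 j : ℝ) * b j :=
    congrArg (fun p : ℝ ×ₗ (ℝ ×ₗ ℝ) => (ofLex (ofLex p).2).1) h
  have hn : (e.1 : ℝ) = (e'.1 : ℝ) :=
    congrArg (fun p : ℝ ×ₗ (ℝ ×ₗ ℝ) => (ofLex (ofLex p).2).2) h
  refine Prod.ext (by exact_mod_cast hn)
    (Prod.ext (IDA.diff_indep haLI hA) (IDA.diff_indep hbLI hB))

lemma IDA.phi_zero_eq :
    (0 : ℝ ×ₗ (ℝ ×ₗ ℝ)) = toLex ((0 : ℝ), toLex ((0 : ℝ), (0 : ℝ))) := rfl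

lemma IDA.phi_bounds (a : Fin r → ℝ) (b : Fin s → ℝ)
    (ha0 : ∀ u : Fin r → ℤ, ∑ j, (u j : ℝ) * a j = 0 → u = 0)
    (hb0 : ∀ v : Fin s → ℤ, ∑ j, (v j : ℝ) * b j = 0 → v = 0)
    (e : LaurentExp r s)
    (h1 : IDA.phi a b e ≤ 0) (h2 : (0 : ℝ ×ₗ (ℝ ×ₗ ℝ)) ≤ IDA.phi a b e + IDA.delta) :
    e = 0 := by
  rw [IDA.phi_zero_eq] at h1 h2
  rw [IDA.phi, IDA.delta, IDA.lex_add, IDA.le3_iff] at h2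
  rw [IDA.phi, IDA.le3_iff] at h1
  have hA : ∑ j, (e.2.1 j : ℝ) * a j = 0 := by
    rcases h1 with h | ⟨h, -⟩ <;> rcases h2 with h' | ⟨h', -⟩ <;> linarith
  replace h1 : (∑ j, (e.2.2 j : ℝ) * b j) < 0
      ∨ ((∑ j, (e.2.2 j : ℝ) * b j) = 0 ∧ (e.1 : ℝ) ≤ 0) := by
    rcases h1 with h | ⟨-, h⟩
    · linarith
    · exact h
  replace h2 : 0 < (∑ j, (e.2.2 j : ℝ) * b j)
      ∨ (0 = (∑ j, (e.2.2 j : ℝ) * b j) ∧ (0 : ℝ) ≤ 0 + (e.1 : ℝ) + 1) := by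
    rcases h2 with h | ⟨-, h⟩
    · linarith
    · rcases h with h | ⟨h3, h4⟩
      · left; linarith
      · right; exact ⟨by linarith, by linarith⟩
  have hB : ∑ j, (e.2.2 j : ℝ) * b j = 0 := by
    rcases h1 with h | ⟨h, -⟩ <;> rcases h2 with h' | ⟨h', -⟩ <;> linarith
  have hn : (e.1 : ℝ) ≤ 0 := by
    rcases h1 with h | ⟨-, h⟩
    · linarith
    · exact h
  have he1 : e.1 = 0 := by
    have hpos : (0 : ℝ) ≤ (e.1 : ℝ) := by positivity
    have h0 : (e.1 : ℝ) = 0 := le_antisymm hn hpos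
    exact_mod_cast h0
  exact Prod.ext he1 (Prod.ext (ha0 _ hA) (hb0 _ hB))

lemma IDA.isUnit_single (u : Fin r → ℤ) (v : Fin s → ℤ) (c : K) (hc : c ≠ 0) :
    IsUnit (AddMonoidAlgebra.single ((0 : ℕ), u, v) c : LaurentRing K r s) := by
  refine IsUnit.of_mul_eq_one (AddMonoidAlgebra.single ((0 : ℕ), -u, -v) c⁻¹) ?_
  rw [AddMonoidAlgebra.single_mul_single]
  have h1 : (((0 : ℕ), u, v) : LaurentExp r s) + ((0 : ℕ), -u, -v) = 0 := by
    refine Prod.ext rfl (Prod.ext ?_ ?_) <;> show _ + _ = 0 <;> exact add_neg_cancel _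
  rw [h1, mul_inv_cancel₀ hc]
  exact (AddMonoidAlgebra.one_def).symm

lemma IDA.isUnit_of_eqn (lam : (Fin r → ℤ) × (Fin s → ℤ) → K)
    (hlam : ∀ {g g'}, lam g = lam g' → g = g')
    (P : LaurentRing K r s) (hP : P ≠ 0) (c : K)
    (h : ∀ e : LaurentExp r s,
      ((e.1 + 1 : ℕ) : K) * P.coeff (e.1 + 1, e.2) + lam e.2 * P.coeff e = c * P.coeff e) :
    IsUnit P := by
  classical
  have claim1 : ∀ e ∈ P.coeff.support, lam e.2 = c := by
    intro e he
    set S := P.coeff.support.filter (fun e' => e'.2 = e.2) with hS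
    have heS : e ∈ S := Finset.mem_filter.mpr ⟨he, rfl⟩
    obtain ⟨m, hmS, hmax⟩ := Finset.exists_max_image S (fun e' => e'.1) ⟨e, heS⟩
    obtain ⟨hmsupp, hm2⟩ := Finset.mem_filter.mp hmS
    have htop : P.coeff (m.1 + 1, m.2) = 0 := by
      by_contra hne
      have hin : ((m.1 + 1, m.2) : LaurentExp r s) ∈ S := by
        refine Finset.mem_filter.mpr ⟨Finsupp.mem_support_iff.mpr hne, hm2⟩
      have := hmax _ hin
      omega
    have hm := h m
    rw [htop, mul_zero, zero_add] at hm
    have hPm : P.coeff m ≠ 0 := Finsupp.mem_support_iff.mp hmsupp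
    rw [← hm2]
    exact mul_right_cancel₀ hPm hm
  have claim2 : ∀ e ∈ P.coeff.support, e.1 = 0 := by
    intro e he
    by_contra hne
    have hPe : P.coeff e ≠ 0 := Finsupp.mem_support_iff.mp he
    obtain ⟨n, hn⟩ : ∃ n, e.1 = n + 1 := ⟨e.1 - 1, by omega⟩
    have hrel := h (n, e.2)
    have hlc : lam e.2 = c := claim1 e he
    rw [hlc] at hrel
    have h0 : ((n + 1 : ℕ) : K) * P.coeff (n + 1, e.2) = 0 := by
      push_cast at hrel ⊢
      linear_combination hrel
    have hne1 : ((n + 1 : ℕ) : K) ≠ 0 := Nat.cast_ne_zero.mpr (Nat.succ_ne_zero n)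
    have hz : P.coeff (n + 1, e.2) = 0 := by
      rcases mul_eq_zero.mp h0 with h' | h'
      · exact absurd h' hne1
      · exact h'
    apply hPe
    rw [show e = ((n + 1 : ℕ), e.2) from Prod.ext hn rfl]
    exact hz
  obtain ⟨e0, he0⟩ := Finsupp.support_nonempty_iff.mpr (show P.coeff ≠ 0 by simpa using hP)
  have hsub : P.coeff.support ⊆ {e0} := by
    intro e he
    rw [Finset.mem_singleton]
    have h1 : e.1 = e0.1 := by rw [claim2 e he, claim2 e0 he0]
    have h2 : e.2 = e0.2 := hlam (by rw [claim1 e he, claim1 e0 he0])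
    exact Prod.ext h1 h2
  have hPs : P = AddMonoidAlgebra.single e0 (P.coeff e0) :=
    AddMonoidAlgebra.coeff_injective (Finsupp.eq_single_iff.mpr ⟨hsub, rfl⟩)
  have he01 : e0.1 = 0 := claim2 e0 he0
  have hPe0 : P.coeff e0 ≠ 0 := Finsupp.mem_support_iff.mp he0
  have he0eq : e0 = ((0 : ℕ), e0.2.1, e0.2.2) := Prod.ext he01 rfl
  rw [hPs, he0eq]
  exact IDA.isUnit_single e0.2.1 e0.2.2 _ (by rw [← he0eq]; exact hPe0)

end IDAaux

/-- If P ∈ ℛ is irreducible then P does not divide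
Q = ∂P/∂x + Σ_j a_j y_j ∂P/∂y_j + Σ_j i b_j z_j ∂P/∂z_j; consequently P and Q are coprime. -/
theorem irreducible_not_dvd_deriv
    (K : Subfield ℂ) [FiniteDimensional ℚ K]
    (hK : ∀ z ∈ K, (starRingEnd ℂ) z ∈ K) (r s : ℕ)
    (a : Fin r → ℝ) (b : Fin s → ℝ)
    (haAlg : ∀ j, IsAlgebraic ℚ (a j)) (hbAlg : ∀ j, IsAlgebraic ℚ (b j))
    (haLI : LinearIndependent ℚ a) (hbLI : LinearIndependent ℚ b)
    (haK : ∀ j, (a j : ℂ) ∈ K) (hbK : ∀ j, Complex.I * (b j : ℂ) ∈ K)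
    (P : LaurentRing K r s) (hirr : Irreducible P)
    (Q : LaurentRing K r s)
    (hQ : Q = derivX K r s P
        + ∑ j, AddMonoidAlgebra.single ((0 : ℕ), (Pi.single j 1 : Fin r → ℤ), (0 : Fin s → ℤ))
            (⟨(a j : ℂ), haK j⟩ : K) * derivY K r s j P
        + ∑ j, AddMonoidAlgebra.single ((0 : ℕ), (0 : Fin r → ℤ), (Pi.single j 1 : Fin s → ℤ))
            (⟨Complex.I * (b j : ℂ), hbK j⟩ : K) * derivZ K r s j P) :
    ¬ P ∣ Q ∧ ∀ D : LaurentRing K r s, D ∣ P → D ∣ Q → IsUnit D := by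
  classical
  have ha0 : ∀ u : Fin r → ℤ, ∑ j, (u j : ℝ) * a j = 0 → u = 0 :=
    fun u hu => IDA.int_indep haLI u hu
  have hb0 : ∀ v : Fin s → ℤ, ∑ j, (v j : ℝ) * b j = 0 → v = 0 :=
    fun v hv => IDA.int_indep hbLI v hv
  have hlamInj : ∀ {g g'}, IDA.lam a b haK hbK g = IDA.lam a b haK hbK g' → g = g' :=
    fun h => IDA.lam_inj a b haK hbK haLI hbLI h
  have hphiInj : Function.Injective (IDA.phi a b) :=
    fun e e' h => IDA.phi_inj a b haLI hbLI h
  have hP0 : P ≠ 0 := hirr.ne_zero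
  -- coefficient formula for Q
  have hQc : ∀ e : LaurentExp r s,
      Q.coeff e = ((e.1 + 1 : ℕ) : K) * P.coeff (e.1 + 1, e.2) + IDA.lam a b haK hbK e.2 * P.coeff e := by
    intro e
    have hsum1 : (∑ j, AddMonoidAlgebra.single
          ((0 : ℕ), (Pi.single j 1 : Fin r → ℤ), (0 : Fin s → ℤ))
          (⟨(a j : ℂ), haK j⟩ : K) * derivY K r s j P).coeff e
        = (∑ j, (e.2.1 j : K) * ⟨(a j : ℂ), haK j⟩) * P.coeff e := by
      rw [AddMonoidAlgebra.coeff_sum, Finsupp.finset_sum_apply, Finset.sum_mul]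
      exact Finset.sum_congr rfl fun j _ => by
        rw [IDA.single_mul_derivY_apply]; ring
    have hsum2 : (∑ j, AddMonoidAlgebra.single
          ((0 : ℕ), (0 : Fin r → ℤ), (Pi.single j 1 : Fin s → ℤ))
          (⟨Complex.I * (b j : ℂ), hbK j⟩ : K) * derivZ K r s j P).coeff e
        = (∑ j, (e.2.2 j : K) * ⟨Complex.I * (b j : ℂ), hbK j⟩) * P.coeff e := by
      rw [AddMonoidAlgebra.coeff_sum, Finsupp.finset_sum_apply, Finset.sum_mul]
      exact Finset.sum_congr rfl fun j _ => by
        rw [IDA.single_mul_derivZ_apply]; ring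
    rw [hQ, AddMonoidAlgebra.coeff_add, AddMonoidAlgebra.coeff_add, Finsupp.add_apply, Finsupp.add_apply, IDA.derivX_apply, hsum1, hsum2,
      IDA.lam, add_mul]
    ring
  -- support of Q is controlled by that of P
  have hsuppQ : ∀ e ∈ Q.coeff.support,
      ∃ e' ∈ P.coeff.support, e'.2 = e.2 ∧ e.1 ≤ e'.1 ∧ e'.1 ≤ e.1 + 1 := by
    intro e he
    have hQe : Q.coeff e ≠ 0 := Finsupp.mem_support_iff.mp he
    by_cases h1 : P.coeff (e.1 + 1, e.2) = 0
    · refine ⟨e, ?_, rfl, le_refl _, Nat.le_succ _⟩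
      rw [Finsupp.mem_support_iff]
      intro h2
      apply hQe
      rw [hQc e, h1, h2]
      ring
    · exact ⟨(e.1 + 1, e.2), Finsupp.mem_support_iff.mpr h1, rfl, Nat.le_succ _, le_refl _⟩
  suffices hnd : ¬ P ∣ Q by
    refine ⟨hnd, fun D hDP hDQ => ?_⟩
    obtain ⟨E, hE⟩ := hDP
    rcases hirr.isUnit_or_isUnit hE with h | h
    · exact h
    · exfalso
      apply hnd
      obtain ⟨u, hu⟩ := h
      have hPD : P ∣ D := ⟨(↑u⁻¹ : LaurentRing K r s), by
        rw [hE, ← hu, mul_assoc, Units.mul_inv, mul_one]⟩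
      exact hPD.trans hDQ
  rintro ⟨R, hR⟩
  by_cases hR0 : R = 0
  · apply hirr.not_isUnit
    refine IDA.isUnit_of_eqn (IDA.lam a b haK hbK) hlamInj P hP0 0 fun e => ?_
    rw [← hQc e, hR, hR0, mul_zero, zero_mul]
    simp
  · have hPsupp : P.coeff.support.Nonempty := Finsupp.support_nonempty_iff.mpr (by simpa using hP0)
    have hRsupp : R.coeff.support.Nonempty := Finsupp.support_nonempty_iff.mpr (by simpa using hR0)
    obtain ⟨eP, hePs, hePmax⟩ := Finset.exists_max_image P.coeff.support (IDA.phi a b) hPsupp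
    obtain ⟨eR, heRs, heRmax⟩ := Finset.exists_max_image R.coeff.support (IDA.phi a b) hRsupp
    obtain ⟨eP', hePs', hePmin⟩ := Finset.exists_min_image P.coeff.support (IDA.phi a b) hPsupp
    obtain ⟨eR', heRs', heRmin⟩ := Finset.exists_min_image R.coeff.support (IDA.phi a b) hRsupp
    have hQtop : (eP + eR) ∈ Q.coeff.support := by
      rw [hR, Finsupp.mem_support_iff,
        AddMonoidAlgebra.coeff_mul_add_of_uniqueAdd (f := P) (g := R)
          (a0 := eP) (b0 := eR) ?_]
      · exact mul_ne_zero (Finsupp.mem_support_iff.mp hePs) (Finsupp.mem_support_iff.mp heRs)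
      · intro x y hx hy hxy
        by_contra hcon
        rw [not_and_or] at hcon
        have hlt : IDA.phi a b x + IDA.phi a b y < IDA.phi a b eP + IDA.phi a b eR := by
          rcases hcon with h | h
          · exact add_lt_add_of_lt_of_le
              (lt_of_le_of_ne (hePmax x hx) (fun hq => h (hphiInj hq))) (heRmax y hy)
          · exact add_lt_add_of_le_of_lt (hePmax x hx)
              (lt_of_le_of_ne (heRmax y hy) (fun hq => h (hphiInj hq)))
        rw [← IDA.phi_add, ← IDA.phi_add, hxy] at hlt
        exact lt_irrefl _ hlt
    have hQbot : (eP' + eR') ∈ Q.coeff.support := by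
      rw [hR, Finsupp.mem_support_iff,
        AddMonoidAlgebra.coeff_mul_add_of_uniqueAdd (f := P) (g := R)
          (a0 := eP') (b0 := eR') ?_]
      · exact mul_ne_zero (Finsupp.mem_support_iff.mp hePs') (Finsupp.mem_support_iff.mp heRs')
      · intro x y hx hy hxy
        by_contra hcon
        rw [not_and_or] at hcon
        have hlt : IDA.phi a b eP' + IDA.phi a b eR' < IDA.phi a b x + IDA.phi a b y := by
          rcases hcon with h | h
          · exact add_lt_add_of_lt_of_le
              (lt_of_le_of_ne (hePmin x hx) (fun hq => h (hphiInj hq.symm))) (heRmin y hy)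
          · exact add_lt_add_of_le_of_lt (hePmin x hx)
              (lt_of_le_of_ne (heRmin y hy) (fun hq => h (hphiInj hq.symm)))
        rw [← IDA.phi_add, ← IDA.phi_add, hxy] at hlt
        exact lt_irrefl _ hlt
    have hbound_up : ∀ e ∈ Q.coeff.support, IDA.phi a b e ≤ IDA.phi a b eP := by
      intro e he
      obtain ⟨e', he', h2, h3, _⟩ := hsuppQ e he
      exact (IDA.phi_mono a b h2.symm h3).trans (hePmax e' he')
    have hbound_dn : ∀ e ∈ Q.coeff.support, IDA.phi a b eP' ≤ IDA.phi a b e + IDA.delta := by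
      intro e he
      obtain ⟨e', he', h2, _, h4⟩ := hsuppQ e he
      have h5 : IDA.phi a b e' ≤ IDA.phi a b (e.1 + 1, e.2) := IDA.phi_mono a b h2 h4
      rw [IDA.phi_succ] at h5
      exact (hePmin e' he').trans h5
    have hup : IDA.phi a b eR ≤ 0 := by
      have h6 := hbound_up _ hQtop
      rw [IDA.phi_add] at h6
      have h7 : IDA.phi a b eP + IDA.phi a b eR ≤ IDA.phi a b eP + 0 := by
        rw [add_zero]; exact h6
      exact le_of_add_le_add_left h7
    have hdn : (0 : ℝ ×ₗ (ℝ ×ₗ ℝ)) ≤ IDA.phi a b eR' + IDA.delta := by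
      have h6 := hbound_dn _ hQbot
      rw [IDA.phi_add] at h6
      have h7 : IDA.phi a b eP' + 0 ≤ IDA.phi a b eP' + (IDA.phi a b eR' + IDA.delta) := by
        rw [add_zero, ← add_assoc]; exact h6
      exact le_of_add_le_add_left h7
    have hsuppR : ∀ e ∈ R.coeff.support, e = 0 := by
      intro e he
      refine IDA.phi_bounds a b ha0 hb0 e ((heRmax e he).trans hup) ?_
      calc (0 : ℝ ×ₗ (ℝ ×ₗ ℝ)) ≤ IDA.phi a b eR' + IDA.delta := hdn
        _ ≤ IDA.phi a b e + IDA.delta := add_le_add_left (heRmin e he) _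
    have hc0 : R = AddMonoidAlgebra.single 0 (R.coeff 0) :=
      AddMonoidAlgebra.coeff_injective (Finsupp.eq_single_iff.mpr
        ⟨fun x hx => Finset.mem_singleton.mpr (hsuppR x hx), rfl⟩)
    apply hirr.not_isUnit
    refine IDA.isUnit_of_eqn (IDA.lam a b haK hbK) hlamInj P hP0 (R.coeff 0) fun e => ?_
    have hQe : Q.coeff e = P.coeff e * R.coeff 0 := by
      rw [hR]
      conv_lhs => rw [hc0]
      rw [AddMonoidAlgebra.coeff_mul_single_zero]
    rw [← hQc e, hQe]
    ring
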